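/- arXiv:1311.3804 — 7 statements merged into one kernel-verified Lean document; each statement's English description precedes it below -/
import Mathlib

section
/- Let G be a finite connected simple graph and x a vertex of G. Then the boundary ∂(x) of x is an x-geodominating set of G; that is, for every vertex u of G there exists a vertex y ∈ ∂(x) such that u lies on some x–y geodesic (equivalently, d(x,u) + d(u,y) = d(x,y)). -/
open SimpleGraph

/-- The boundary of a vertex `x`: vertices `v` all of whose neighbors are
no further from `x` than `v` itself. -/
def boundary {V : Type*} (G : SimpleGraph V) (x : V) : Set V :=
  {v | ∀ w, G.Adj v w → G.dist x w ≤ G.dist x v}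

/-- `S` is an `x`-geodominating set: every vertex lies on an `x`–`y` geodesic
for some `y ∈ S`. -/
def IsGeodominatingSet {V : Type*} (G : SimpleGraph V) (x : V) (S : Set V) : Prop :=
  ∀ u : V, ∃ y ∈ S, G.dist x u + G.dist u y = G.dist x y

theorem boundary_isGeodominatingSet {V : Type*} [Fintype V] (G : SimpleGraph V)
    (hG : G.Connected) (x : V) :
    IsGeodominatingSet G x (boundary G x) := by
  classical
  intro u
  obtain ⟨y, hy, hmax⟩ := Finset.exists_max_image
    (Finset.univ.filter (fun y => G.dist x u + G.dist u y = G.dist x y)) (G.dist x)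
    ⟨u, by simp⟩
  simp only [Finset.mem_filter, Finset.mem_univ, true_and] at hy
  refine ⟨y, ?_, hy⟩
  intro w hadj
  by_contra h
  push_neg at h
  have hyw : G.dist y w = 1 := (dist_eq_one_iff_adj).mpr hadj
  have h1 : G.dist x w ≤ G.dist x y + 1 := by
    calc G.dist x w ≤ G.dist x y + G.dist y w := hG.dist_triangle
    _ = G.dist x y + 1 := by rw [hyw]
  have hxw : G.dist x w = G.dist x y + 1 := le_antisymm h1 h
  have huw : G.dist x u + G.dist u w = G.dist x w := by
    have hle : G.dist x u + G.dist u w ≤ G.dist x w := by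
      calc G.dist x u + G.dist u w ≤ G.dist x u + (G.dist u y + G.dist y w) := by
            exact Nat.add_le_add_left hG.dist_triangle _
      _ = G.dist x y + 1 := by rw [hyw]; omega
      _ = G.dist x w := hxw.symm
    exact le_antisymm hle hG.dist_triangle
  have := hmax w (by simp [huw])
  omega
end

section
/- Let G be a finite connected simple graph and x a vertex of G. Then ∂(x) is the unique x-geodominating set of minimum cardinality; that is, ∂(x) is an x-geodominating set and every x-geodominating set S satisfies |∂(x)| ≤ |S|, with equality only if S = ∂(x). -/
open SimpleGraph

private lemma boundary_subset_aux {V : Type*} (G : SimpleGraph V)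
    (hG : G.Connected) (x : V) {S : Set V} (hS : IsGeodominatingSet G x S) :
    boundary G x ⊆ S := by
  intro v hv
  obtain ⟨y, hyS, hy⟩ := hS v
  by_cases hvy : v = y
  · exact hvy ▸ hyS
  · exfalso
    have hpos : G.dist v y ≠ 0 := (hG.pos_dist_of_ne hvy).ne'
    obtain ⟨p, hp⟩ := exists_walk_of_dist_ne_zero hpos
    cases p with
    | nil => simp [SimpleGraph.dist_self] at hpos
    | cons hadj q =>
      rename_i w
      have hq : G.dist w y ≤ q.length := dist_le q
      have hxw : G.dist x w ≤ G.dist x v := hv w hadj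
      have h1 : G.dist x y ≤ G.dist x w + G.dist w y := hG.dist_triangle
      have hlen : q.length + 1 = G.dist v y := by simpa using hp
      omega

theorem boundary_unique_minimum_geodominatingSet {V : Type*} [Fintype V] (G : SimpleGraph V)
    (hG : G.Connected) (x : V) :
    IsGeodominatingSet G x (boundary G x) ∧
      ∀ S : Set V, IsGeodominatingSet G x S →
        (boundary G x).ncard ≤ S.ncard ∧ ((boundary G x).ncard = S.ncard → S = boundary G x) := by
  constructor
  · intro u
    -- pick y with u on an x–y geodesic, maximizing dist x y
    have hne : (Finset.univ.filter
        (fun y => G.dist x u + G.dist u y = G.dist x y)).Nonempty := by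
      classical
      exact ⟨u, by simp [SimpleGraph.dist_self]⟩
    classical
    obtain ⟨y, hymem, hymax⟩ := Finset.exists_max_image _ (fun y => G.dist x y) hne
    simp only [Finset.mem_filter, Finset.mem_univ, true_and] at hymem
    refine ⟨y, ?_, hymem⟩
    intro w hadj
    by_contra hlt
    push_neg at hlt
    have h1 : G.dist x w ≤ G.dist x y + G.dist y w := hG.dist_triangle
    have hyw : G.dist y w = 1 := dist_eq_one_iff_adj.mpr hadj
    have heq : G.dist x w = G.dist x y + 1 := by omega
    have h2 : G.dist x w ≤ G.dist x u + G.dist u w := hG.dist_triangle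
    have h3 : G.dist u w ≤ G.dist u y + G.dist y w := hG.dist_triangle
    have hmem : G.dist x u + G.dist u w = G.dist x w := by omega
    have := hymax w (by simp [hmem])
    omega
  · intro S hS
    have hsub : boundary G x ⊆ S := boundary_subset_aux G hG x hS
    have hfin : S.Finite := S.toFinite
    constructor
    · exact Set.ncard_le_ncard hsub hfin
    · intro hcard
      exact (Set.eq_of_subset_of_ncard_le hsub hcard.ge hfin).symm
end

section
/- Let G and H be finite connected simple graphs, g ∈ V(G) and h ∈ V(H). Then the boundary of the vertex (g,h) in the Cartesian product G □ H equals the Cartesian product of the boundaries: ∂_{G □ H}((g,h)) = ∂_G(g) × ∂_H(h). -/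
open SimpleGraph

private lemma dist_le_walk_length {V W : Type*} {G : SimpleGraph V} {H : SimpleGraph W}
    (hG : G.Connected) (hH : H.Connected) :
    ∀ {x y : V × W} (p : (G □ H).Walk x y),
      G.dist x.1 y.1 + H.dist x.2 y.2 ≤ p.length := by
  intro x y p
  induction p with
  | nil => simp
  | @cons a b c hab p ih =>
    rw [SimpleGraph.Walk.length_cons]
    rcases hab with ⟨hadj, heq⟩ | ⟨hadj, heq⟩
    · calc G.dist a.1 c.1 + H.dist a.2 c.2
          ≤ (G.dist a.1 b.1 + G.dist b.1 c.1) + H.dist a.2 c.2 :=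
            Nat.add_le_add_right (hG.dist_triangle) _
        _ = G.dist a.1 b.1 + (G.dist b.1 c.1 + H.dist b.2 c.2) := by rw [heq]; ring
        _ ≤ 1 + p.length := by
            have : G.dist a.1 b.1 ≤ 1 := by
              simpa using SimpleGraph.dist_le (hadj.toWalk)
            exact Nat.add_le_add this ih
        _ = p.length + 1 := Nat.add_comm _ _
    · calc G.dist a.1 c.1 + H.dist a.2 c.2
          ≤ G.dist a.1 c.1 + (H.dist a.2 b.2 + H.dist b.2 c.2) :=
            Nat.add_le_add_left (hH.dist_triangle) _
        _ = H.dist a.2 b.2 + (G.dist b.1 c.1 + H.dist b.2 c.2) := by rw [heq]; ring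
        _ ≤ 1 + p.length := by
            have : H.dist a.2 b.2 ≤ 1 := by
              simpa using SimpleGraph.dist_le (hadj.toWalk)
            exact Nat.add_le_add this ih
        _ = p.length + 1 := Nat.add_comm _ _

private lemma dist_boxProd {V W : Type*} {G : SimpleGraph V} {H : SimpleGraph W}
    (hG : G.Connected) (hH : H.Connected) (x y : V × W) :
    (G □ H).dist x y = G.dist x.1 y.1 + H.dist x.2 y.2 := by
  refine le_antisymm ?_ ?_
  · obtain ⟨p, hp⟩ := hG.exists_walk_length_eq_dist x.1 y.1
    obtain ⟨q, hq⟩ := hH.exists_walk_length_eq_dist x.2 y.2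
    have key := SimpleGraph.dist_le
      (((p.boxProdLeft H x.2).append (q.boxProdRight G y.1)).copy (Prod.mk.eta) (Prod.mk.eta))
    rw [SimpleGraph.Walk.length_copy, SimpleGraph.Walk.length_append] at key
    have e1 : (p.boxProdLeft H x.2).length = p.length := SimpleGraph.Walk.length_map _ _
    have e2 : (q.boxProdRight G y.1).length = q.length := SimpleGraph.Walk.length_map _ _
    rw [e1, e2] at key
    simpa [SimpleGraph.Walk.boxProdLeft, SimpleGraph.Walk.boxProdRight, SimpleGraph.Walk.length_map, hp, hq] using key
  · obtain ⟨p, hp⟩ := (hG.boxProd hH).exists_walk_length_eq_dist x y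
    rw [← hp]
    exact dist_le_walk_length hG hH p

theorem boundary_boxProd {V W : Type*} [Fintype V] [Fintype W]
    (G : SimpleGraph V) (H : SimpleGraph W) (hG : G.Connected) (hH : H.Connected)
    (g : V) (h : W) :
    boundary (G □ H) (g, h) = boundary G g ×ˢ boundary H h := by
  ext ⟨a, b⟩
  simp only [boundary, Set.mem_setOf_eq, Set.mem_prod]
  constructor
  · intro hv
    constructor
    · intro w hw
      have := hv (w, b) (Or.inl ⟨hw, rfl⟩)
      rw [dist_boxProd hG hH, dist_boxProd hG hH] at this
      simpa using this
    · intro w hw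
      have := hv (a, w) (Or.inr ⟨hw, rfl⟩)
      rw [dist_boxProd hG hH, dist_boxProd hG hH] at this
      simpa using this
  · rintro ⟨h1, h2⟩ ⟨c, d⟩ hadj
    rw [dist_boxProd hG hH, dist_boxProd hG hH]
    rcases hadj with ⟨hadj, heq⟩ | ⟨hadj, heq⟩
    · simp only at heq; subst heq
      exact Nat.add_le_add_right (h1 c hadj) _
    · simp only at heq; subst heq
      exact Nat.add_le_add_left (h2 d hadj) _
end

section
/- Let G and H be finite connected simple graphs, g ∈ V(G) and h ∈ V(H). Then ∂_G(g) × ∂_H(h) ⊆ ∂_{G ⊠ H}((g,h)), where G ⊠ H denotes the strong product of G and H. -/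
open SimpleGraph

/-- The strong product of simple graphs. -/
def strongProd {V W : Type*} (G : SimpleGraph V) (H : SimpleGraph W) : SimpleGraph (V × W) where
  Adj p q := (G.Adj p.1 q.1 ∧ p.2 = q.2) ∨ (p.1 = q.1 ∧ H.Adj p.2 q.2) ∨
    (G.Adj p.1 q.1 ∧ H.Adj p.2 q.2)
  symm := by
    constructor
    rintro ⟨a, b⟩ ⟨c, d⟩ (⟨h, rfl⟩ | ⟨rfl, h⟩ | ⟨h1, h2⟩)
    · exact Or.inl ⟨h.symm, rfl⟩
    · exact Or.inr (Or.inl ⟨rfl, h.symm⟩)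
    · exact Or.inr (Or.inr ⟨h1.symm, h2.symm⟩)
  loopless := by
    constructor
    rintro ⟨a, b⟩ (⟨h, -⟩ | ⟨-, h⟩ | ⟨h, -⟩) <;> exact h.ne rfl

section Aux

variable {V W : Type*} {G : SimpleGraph V} {H : SimpleGraph W}

/-- Embedding of `H` in the strong product with first coordinate fixed. -/
def sndHom (G : SimpleGraph V) (H : SimpleGraph W) (a : V) : H →g strongProd G H where
  toFun w := (a, w)
  map_rel' h := Or.inr (Or.inl ⟨rfl, h⟩)

/-- Embedding of `G` in the strong product with second coordinate fixed. -/
def fstHom (G : SimpleGraph V) (H : SimpleGraph W) (b : W) : G →g strongProd G H where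
  toFun v := (v, b)
  map_rel' h := Or.inl ⟨h, rfl⟩

/-- Combine walks in the factors into a walk in the strong product. -/
def prodWalk : ∀ {a c : V} {b d : W}, G.Walk a c → H.Walk b d →
    (strongProd G H).Walk (a, b) (c, d)
  | _, _, _, _, SimpleGraph.Walk.nil, q => q.map (sndHom G H _)
  | _, _, _, _, SimpleGraph.Walk.cons h p, SimpleGraph.Walk.nil =>
      (SimpleGraph.Walk.cons h p).map (fstHom G H _)
  | _, _, _, _, SimpleGraph.Walk.cons h p, SimpleGraph.Walk.cons h' q =>
      SimpleGraph.Walk.cons (Or.inr (Or.inr ⟨h, h'⟩)) (prodWalk p q)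

lemma prodWalk_length : ∀ {a c : V} {b d : W} (p : G.Walk a c) (q : H.Walk b d),
    (prodWalk p q).length = max p.length q.length
  | _, _, _, _, SimpleGraph.Walk.nil, q => by
      simp [prodWalk]; exact SimpleGraph.Walk.length_map _ _
  | _, _, _, _, SimpleGraph.Walk.cons h p, SimpleGraph.Walk.nil => by
      simp [prodWalk]; exact congrArg (· + 1) (SimpleGraph.Walk.length_map _ p)
  | _, _, _, _, SimpleGraph.Walk.cons h p, SimpleGraph.Walk.cons h' q => by
      simp [prodWalk, prodWalk_length p q, Nat.succ_max_succ]
      exact congrArg (· + 1) (prodWalk_length p q)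

lemma fst_walk {x y : V × W} (p : (strongProd G H).Walk x y) :
    ∃ q : G.Walk x.1 y.1, q.length ≤ p.length := by
  induction p with
  | nil => exact ⟨SimpleGraph.Walk.nil, le_rfl⟩
  | cons hadj p ih =>
    obtain ⟨q, hq⟩ := ih
    rcases hadj with ⟨h, -⟩ | ⟨heq, -⟩ | ⟨h, -⟩
    · exact ⟨SimpleGraph.Walk.cons h q, by exact Nat.succ_le_succ hq⟩
    · exact ⟨q.copy heq.symm rfl, by exact (SimpleGraph.Walk.length_copy _ _ _).le.trans (hq.trans (Nat.le_succ _))⟩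
    · exact ⟨SimpleGraph.Walk.cons h q, by exact Nat.succ_le_succ hq⟩

lemma snd_walk {x y : V × W} (p : (strongProd G H).Walk x y) :
    ∃ q : H.Walk x.2 y.2, q.length ≤ p.length := by
  induction p with
  | nil => exact ⟨SimpleGraph.Walk.nil, le_rfl⟩
  | cons hadj p ih =>
    obtain ⟨q, hq⟩ := ih
    rcases hadj with ⟨-, heq⟩ | ⟨-, h⟩ | ⟨-, h⟩
    · exact ⟨q.copy heq.symm rfl, by exact (SimpleGraph.Walk.length_copy _ _ _).le.trans (hq.trans (Nat.le_succ _))⟩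
    · exact ⟨SimpleGraph.Walk.cons h q, by exact Nat.succ_le_succ hq⟩
    · exact ⟨SimpleGraph.Walk.cons h q, by exact Nat.succ_le_succ hq⟩

lemma dist_strongProd (hG : G.Connected) (hH : H.Connected) (a c : V) (b d : W) :
    (strongProd G H).dist (a, b) (c, d) = max (G.dist a c) (H.dist b d) := by
  apply le_antisymm
  · obtain ⟨p, hp⟩ := hG.exists_walk_length_eq_dist a c
    obtain ⟨q, hq⟩ := hH.exists_walk_length_eq_dist b d
    calc (strongProd G H).dist (a, b) (c, d) ≤ (prodWalk p q).length :=
          SimpleGraph.dist_le _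
      _ = max (G.dist a c) (H.dist b d) := by rw [prodWalk_length, hp, hq]
  · have hre : (strongProd G H).Reachable (a, b) (c, d) :=
      ⟨prodWalk ((hG.preconnected a c).some) ((hH.preconnected b d).some)⟩
    obtain ⟨r, hr⟩ := hre.exists_walk_length_eq_dist
    obtain ⟨q1, h1⟩ := fst_walk r
    obtain ⟨q2, h2⟩ := snd_walk r
    exact max_le ((SimpleGraph.dist_le q1).trans (hr ▸ h1))
      ((SimpleGraph.dist_le q2).trans (hr ▸ h2))

end Aux

theorem prod_boundary_subset_boundary_strongProd {V W : Type*} [Fintype V] [Fintype W]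
    (G : SimpleGraph V) (H : SimpleGraph W) (hG : G.Connected) (hH : H.Connected)
    (g : V) (h : W) :
    boundary G g ×ˢ boundary H h ⊆ boundary (strongProd G H) (g, h) := by
  rintro ⟨v, w⟩ ⟨hv, hw⟩ ⟨v', w'⟩ hadj
  rw [dist_strongProd hG hH, dist_strongProd hG hH]
  have h1 : G.dist g v' ≤ G.dist g v := by
    rcases hadj with ⟨ha, -⟩ | ⟨ha, -⟩ | ⟨ha, -⟩
    · exact hv v' ha
    · exact le_of_eq (by simp at ha; rw [ha])
    · exact hv v' ha
  have h2 : H.dist h w' ≤ H.dist h w := by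
    rcases hadj with ⟨-, ha⟩ | ⟨-, ha⟩ | ⟨-, ha⟩
    · exact le_of_eq (by simp at ha; rw [ha])
    · exact hw w' ha
    · exact hw w' ha
  exact max_le_max h1 h2
end

section
/- Let G and H be finite connected simple graphs, x ∈ V(G) and y ∈ V(H). Then the (x,y)-geodomination number of the Cartesian product satisfies g_{(x,y)}(G □ H) = g_x(G) · g_y(H). -/
open SimpleGraph

/-- The `x`-geodomination number: the minimum cardinality of an `x`-geodominating set. -/
noncomputable def geodominationNumber {V : Type*} (G : SimpleGraph V) (x : V) : ℕ :=
  sInf {n : ℕ | ∃ S : Set V, IsGeodominatingSet G x S ∧ S.ncard = n}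

section aux

variable {V W : Type*} {G : SimpleGraph V} {H : SimpleGraph W}

lemma aux_walk_ge (hG : G.Connected) (hH : H.Connected) {y : V × W} :
    ∀ {p : V × W} (w : (G □ H).Walk p y),
      G.dist p.1 y.1 + H.dist p.2 y.2 ≤ w.length := by
  intro p w
  induction w with
  | nil => simp [SimpleGraph.dist_self]
  | @cons p q r h w ih =>
    rw [Walk.length_cons]
    rcases h with ⟨hg, he⟩ | ⟨hh, he⟩
    · have h1 : G.dist p.1 q.1 ≤ 1 := by
        simpa using G.dist_le (Walk.cons hg Walk.nil)
      have h2 := hG.dist_triangle (u := p.1) (v := q.1) (w := r.1)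
      have h3 : H.dist p.2 r.2 = H.dist q.2 r.2 := by rw [he]
      omega
    · have h1 : H.dist p.2 q.2 ≤ 1 := by
        simpa using H.dist_le (Walk.cons hh Walk.nil)
      have h2 := hH.dist_triangle (u := p.2) (v := q.2) (w := r.2)
      have h3 : G.dist p.1 r.1 = G.dist q.1 r.1 := by rw [he]
      omega

lemma boxProd_dist (hG : G.Connected) (hH : H.Connected) (p q : V × W) :
    (G □ H).dist p q = G.dist p.1 q.1 + H.dist p.2 q.2 := by
  apply le_antisymm
  · obtain ⟨w1, hw1⟩ := hG.exists_walk_length_eq_dist p.1 q.1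
    obtain ⟨w2, hw2⟩ := hH.exists_walk_length_eq_dist p.2 q.2
    have := (G □ H).dist_le ((w1.boxProdLeft H p.2).append (w2.boxProdRight G q.1))
    rw [Walk.length_append, show (w1.boxProdLeft H p.2).length = w1.length from Walk.length_map _ _,
      show (w2.boxProdRight G q.1).length = w2.length from Walk.length_map _ _, hw1, hw2] at this
    exact this
  · obtain ⟨w, hw⟩ := (hG.boxProd hH).exists_walk_length_eq_dist p q
    rw [← hw]
    exact aux_walk_ge hG hH w

/-- The set of `x`-maximal vertices. -/
def maxSet (G : SimpleGraph V) (x : V) : Set V :=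
  {v | ∀ w, G.dist x v + G.dist v w = G.dist x w → w = v}

lemma maxSet_geodominating [Fintype V] (hG : G.Connected) (x : V) :
    IsGeodominatingSet G x (maxSet G x) := by
  intro u
  classical
  set C : Finset V := Finset.univ.filter (fun s => G.dist x u + G.dist u s = G.dist x s) with hC
  have hu : u ∈ C := by simp [hC, SimpleGraph.dist_self]
  obtain ⟨s, hs, hmax⟩ := C.exists_max_image (fun s => G.dist x s) ⟨u, hu⟩
  simp only [hC, Finset.mem_filter, Finset.mem_univ, true_and] at hs
  refine ⟨s, ?_, hs⟩
  intro w hw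
  have ht1 := hG.dist_triangle (u := x) (v := u) (w := w)
  have ht2 := hG.dist_triangle (u := u) (v := s) (w := w)
  have hwC : w ∈ C := by
    simp only [hC, Finset.mem_filter, Finset.mem_univ, true_and]
    omega
  have := hmax w hwC
  have hsw : G.dist s w = 0 := by omega
  exact ((hG.dist_eq_zero_iff).mp hsw).symm

lemma maxSet_subset {x : V} {S : Set V} (hS : IsGeodominatingSet G x S) :
    maxSet G x ⊆ S := by
  intro v hv
  obtain ⟨s, hsS, hs⟩ := hS v
  rwa [hv s hs] at hsS

lemma geodominationNumber_eq_maxSet [Fintype V] (hG : G.Connected) (x : V) :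
    geodominationNumber G x = (maxSet G x).ncard := by
  apply le_antisymm
  · exact Nat.sInf_le ⟨maxSet G x, maxSet_geodominating hG x, rfl⟩
  · refine le_csInf ⟨(maxSet G x).ncard, ⟨maxSet G x, maxSet_geodominating hG x, rfl⟩⟩ ?_
    rintro n ⟨S, hS, rfl⟩
    exact Set.ncard_le_ncard (maxSet_subset hS) (Set.toFinite S)

lemma maxSet_boxProd (hG : G.Connected) (hH : H.Connected) (x : V) (y : W) :
    maxSet (G □ H) (x, y) = maxSet G x ×ˢ maxSet H y := by
  ext ⟨s, t⟩
  constructor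
  · intro h
    constructor
    · show s ∈ maxSet G x
      intro w hw
      have := h (w, t) (by
        rw [boxProd_dist hG hH, boxProd_dist hG hH, boxProd_dist hG hH]
        simp [SimpleGraph.dist_self]
        omega)
      exact congrArg Prod.fst this
    · show t ∈ maxSet H y
      intro z hz
      have := h (s, z) (by
        rw [boxProd_dist hG hH, boxProd_dist hG hH, boxProd_dist hG hH]
        simp [SimpleGraph.dist_self]
        omega)
      exact congrArg Prod.snd this
  · rintro ⟨hs, ht⟩ ⟨w, z⟩ hw
    rw [boxProd_dist hG hH, boxProd_dist hG hH, boxProd_dist hG hH] at hw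
    simp at hw
    have t1 := hG.dist_triangle (u := x) (v := s) (w := w)
    have t2 := hH.dist_triangle (u := y) (v := t) (w := z)
    have e1 : G.dist x s + G.dist s w = G.dist x w := by omega
    have e2 : H.dist y t + H.dist t z = H.dist y z := by omega
    rw [hs w e1, ht z e2]

lemma ncard_sprod (A : Set V) (B : Set W) : (A ×ˢ B).ncard = A.ncard * B.ncard := by
  rw [← Nat.card_coe_set_eq, ← Nat.card_coe_set_eq, ← Nat.card_coe_set_eq,
    Nat.card_congr (Equiv.Set.prod A B), Nat.card_prod]

end aux

theorem geodominationNumber_boxProd {V W : Type*} [Fintype V] [Fintype W]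
    (G : SimpleGraph V) (H : SimpleGraph W) (hG : G.Connected) (hH : H.Connected)
    (x : V) (y : W) :
    geodominationNumber (G □ H) (x, y) = geodominationNumber G x * geodominationNumber H y := by
  rw [geodominationNumber_eq_maxSet (hG.boxProd hH) (x, y),
    geodominationNumber_eq_maxSet hG x, geodominationNumber_eq_maxSet hH y,
    maxSet_boxProd hG hH, ncard_sprod]
end

section
/- Let G be a finite connected simple graph and x a vertex of G. Then the set ∂(x) ∪ {x} is a geodetic set of G; that is, every vertex of G lies on a u–v geodesic for some u, v ∈ ∂(x) ∪ {x}. -/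
open SimpleGraph

/-- `S` is a geodetic set: every vertex lies on a `u`–`v` geodesic for some `u, v ∈ S`. -/
def IsGeodeticSet {V : Type*} (G : SimpleGraph V) (S : Set V) : Prop :=
  ∀ w : V, ∃ u ∈ S, ∃ v ∈ S, G.dist u w + G.dist w v = G.dist u v

private lemma dist_lt_card' {V : Type*} [Fintype V] (G : SimpleGraph V) (hG : G.Connected)
    (x v : V) : G.dist x v < Fintype.card V := by
  obtain ⟨p, hp⟩ := hG.exists_path_of_dist x v
  rw [← hp.2]
  exact hp.1.length_lt

theorem boundary_union_self_isGeodeticSet {V : Type*} [Fintype V] (G : SimpleGraph V)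
    (hG : G.Connected) (x : V) :
    IsGeodeticSet G (boundary G x ∪ {x}) := by
  have key : ∀ n : ℕ, ∀ v : V, Fintype.card V - G.dist x v ≤ n →
      ∃ b ∈ boundary G x, G.dist x v + G.dist v b = G.dist x b := by
    intro n
    induction n with
    | zero => intro v hv; exact absurd (dist_lt_card' G hG x v) (by omega)
    | succ n ih =>
      intro v hv
      by_cases hb : v ∈ boundary G x
      · exact ⟨v, hb, by simp⟩
      · simp only [boundary, Set.mem_setOf_eq, not_forall] at hb
        obtain ⟨w, hadj, hlt⟩ := hb
        push_neg at hlt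
        have h1 : G.dist v w = 1 := (G.dist_eq_one_iff_adj).mpr hadj
        have hle : G.dist x w ≤ G.dist x v + 1 := by
          calc G.dist x w ≤ G.dist x v + G.dist v w := hG.dist_triangle
            _ = G.dist x v + 1 := by rw [h1]
        have heq : G.dist x w = G.dist x v + 1 := by omega
        obtain ⟨b, hbmem, hbeq⟩ := ih w (by omega)
        refine ⟨b, hbmem, le_antisymm ?_ hG.dist_triangle⟩
        have h2 : G.dist v b ≤ 1 + G.dist w b := by
          calc G.dist v b ≤ G.dist v w + G.dist w b := hG.dist_triangle
            _ = 1 + G.dist w b := by rw [h1]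
        omega
  intro w
  obtain ⟨b, hbmem, hbeq⟩ := key (Fintype.card V) w (by omega)
  exact ⟨x, Or.inr rfl, b, Or.inl hbmem, hbeq⟩
end

section
/- Let G be a finite connected simple graph, let v be a simplicial vertex of G, and let x be any vertex of G with x ≠ v. Then v belongs to the boundary ∂(x) of x; consequently v belongs to the unique minimum x-geodominating set of G. -/
open SimpleGraph

theorem simplicial_mem_boundary {V : Type*} [Fintype V] (G : SimpleGraph V)
    (hG : G.Connected) (v : V)
    (hv : ∀ a b : V, G.Adj v a → G.Adj v b → a ≠ b → G.Adj a b)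
    (x : V) (hxv : x ≠ v) :
    v ∈ boundary G x ∧
      ∀ S : Set V, IsGeodominatingSet G x S →
        (∀ T : Set V, IsGeodominatingSet G x T → S.ncard ≤ T.ncard) → v ∈ S := by
  have hbd : v ∈ boundary G x := by
    intro w hw
    -- shortest walk from v to x
    obtain ⟨p, hp⟩ := hG.exists_walk_length_eq_dist v x
    have hpos : 0 < G.dist v x := hG.pos_dist_of_ne (Ne.symm hxv)
    cases p with
    | nil => simp at hp; simp at hpos
    | @cons _ u _ h q =>
      have hxu : G.dist x u ≤ q.length := by
        simpa using G.dist_le q.reverse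
      have hlen : G.dist v x = q.length + 1 := by
        simpa [Nat.add_comm] using hp.symm
      have hxv' : G.dist x v = q.length + 1 := by
        rwa [SimpleGraph.dist_comm]
      by_cases huw : w = u
      · subst huw; omega
      · have hadj : G.Adj u w := hv u w h hw (Ne.symm (by exact huw))
        have : G.dist x w ≤ G.dist x u + G.dist u w := hG.dist_triangle
        have h1 : G.dist u w = 1 := dist_eq_one_iff_adj.mpr hadj
        omega
  refine ⟨hbd, ?_⟩
  intro S hS _
  obtain ⟨y, hyS, hy⟩ := hS v
  by_cases hyv : y = v
  · subst hyv; exact hyS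
  · exfalso
    have hpos : 0 < G.dist v y := hG.pos_dist_of_ne (fun h => hyv h.symm)
    obtain ⟨p, hp⟩ := hG.exists_walk_length_eq_dist v y
    cases p with
    | nil => simp at hp; omega
    | @cons _ w _ h q =>
      have hwy : G.dist w y ≤ q.length := G.dist_le q
      have hlen : G.dist v y = q.length + 1 := by
        simpa [Nat.add_comm] using hp.symm
      have hxw : G.dist x w ≤ G.dist x v := hbd w h
      have ht : G.dist x y ≤ G.dist x w + G.dist w y := hG.dist_triangle
      omega
end
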